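/- In the capacitated reduction graph G_p (defined as above with w = 2^{|U_2|}), if every total assignment to the CNF formula satisfies at most p − 1 clauses, then for every pair (α, γ) of assignments to U_1 and U_3, the maximum α-γ flow in G_p is at least w·m. -/
import Mathlib


attribute [local instance] Classical.propDecidable

/-- A feasible `s`-`t` flow in a directed capacitated graph given by `cap`:
capacity constraints on every edge and conservation at every vertex other than `s`, `t`. -/
def IsFlow {V : Type*} [Fintype V] (cap : V → V → ℕ) (s t : V) (f : V → V → ℕ) : Prop :=
  (∀ u v, f u v ≤ cap u v) ∧
  ∀ v, v ≠ s → v ≠ t → ∑ u, f u v = ∑ u, f v u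

/-- The maximum `s`-`t` flow value: the supremum of net flow out of `s` over feasible flows. -/
noncomputable def maxFlow {V : Type*} [Fintype V] (cap : V → V → ℕ) (s t : V) : ℕ :=
  sSup {x : ℕ | ∃ f, IsFlow cap s t f ∧ ∑ v, f s v = x + ∑ v, f v s}


/-- A CNF clause over variables `U1 ⊕ U2 ⊕ U3`. -/
abbrev Clause3 (U1 U2 U3 : Type*) := Finset ((U1 ⊕ U2 ⊕ U3) × Bool)

/-- The assignment `a` to `U1` satisfies the clause `C`. -/
def sat3A {U1 U2 U3 : Type*} (a : U1 → Bool) (C : Clause3 U1 U2 U3) : Prop :=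
  ∃ l ∈ C, ∃ x : U1, l.1 = Sum.inl x ∧ a x = l.2

/-- The assignment `b` to `U2` satisfies the clause `C`. -/
def sat3B {U1 U2 U3 : Type*} (b : U2 → Bool) (C : Clause3 U1 U2 U3) : Prop :=
  ∃ l ∈ C, ∃ x : U2, l.1 = Sum.inr (Sum.inl x) ∧ b x = l.2

/-- The assignment `g` to `U3` satisfies the clause `C`. -/
def sat3G {U1 U2 U3 : Type*} (g : U3 → Bool) (C : Clause3 U1 U2 U3) : Prop :=
  ∃ l ∈ C, ∃ x : U3, l.1 = Sum.inr (Sum.inr x) ∧ g x = l.2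

/-- Per-`β` internal vertices of the capacitated reduction graph `G_p`. -/
inductive CMid (m : ℕ) where
  | bl (i : Fin m)   -- β_i^l
  | bc (i : Fin m)   -- β_i^c
  | br (i : Fin m)   -- β_i^r
  | bp               -- β'
  deriving DecidableEq, Fintype

/-- Vertices of the capacitated reduction graph `G_p`: assignments `α` to `U1`,
per-`β` internal vertices, clause vertices (`(i, 0)` is `C_i^⊨`, `(i, 1)` is `C_i^⊭`,
`(i, 2)` is `C_i`), the vertex `v_B`, and assignments `γ` to `U3`. -/
abbrev CV (U1 U2 U3 : Type*) (m : ℕ) :=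
  (U1 → Bool) ⊕ ((U2 → Bool) × CMid m) ⊕ (Fin m × Fin 3) ⊕ Unit ⊕ (U3 → Bool)

/-- Capacities of `G_p`: `(α, C_i^⊨)` of capacity `w` if `α ⊨ C_i`, else `(α, C_i^⊭)`
of capacity `w`; `(C_i^⊨, β_i^c)`, `(C_i^⊭, β_i^l)` of capacity 1 for every `β`;
`(β_i^l, β_i^r)` of capacity 1 iff `β ⊭ C_i`; `(β_i^l, β_i^c)`, `(β_i^c, β')`,
`(β_i^r, C_i)` of capacity 1; `(β', v_B)` of capacity `p − 1`; `(v_B, γ)` of capacity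
`w(p − 1)` for every `γ`; `(C_i, γ)` of capacity `w` iff `γ ⊭ C_i`. -/
noncomputable def ccap {U1 U2 U3 : Type*} {m : ℕ} (F : Fin m → Clause3 U1 U2 U3)
    (w p : ℕ) : CV U1 U2 U3 m → CV U1 U2 U3 m → ℕ
  | Sum.inl a, Sum.inr (Sum.inr (Sum.inl (i, j))) =>
      if j = 0 ∧ sat3A a (F i) then w else if j = 1 ∧ ¬ sat3A a (F i) then w else 0
  | Sum.inr (Sum.inr (Sum.inl (i, j))), Sum.inr (Sum.inl (_, CMid.bc i')) =>
      if j = 0 ∧ i = i' then 1 else 0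
  | Sum.inr (Sum.inr (Sum.inl (i, j))), Sum.inr (Sum.inl (_, CMid.bl i')) =>
      if j = 1 ∧ i = i' then 1 else 0
  | Sum.inr (Sum.inl (b, CMid.bl i)), Sum.inr (Sum.inl (b', CMid.br i')) =>
      if b = b' ∧ i = i' ∧ ¬ sat3B b (F i) then 1 else 0
  | Sum.inr (Sum.inl (b, CMid.bl i)), Sum.inr (Sum.inl (b', CMid.bc i')) =>
      if b = b' ∧ i = i' then 1 else 0
  | Sum.inr (Sum.inl (b, CMid.bc _)), Sum.inr (Sum.inl (b', CMid.bp)) =>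
      if b = b' then 1 else 0
  | Sum.inr (Sum.inl (_, CMid.br i)), Sum.inr (Sum.inr (Sum.inl (i', j))) =>
      if j = 2 ∧ i = i' then 1 else 0
  | Sum.inr (Sum.inl (_, CMid.bp)), Sum.inr (Sum.inr (Sum.inr (Sum.inl _))) => p - 1
  | Sum.inr (Sum.inr (Sum.inr (Sum.inl _))), Sum.inr (Sum.inr (Sum.inr (Sum.inr _))) =>
      w * (p - 1)
  | Sum.inr (Sum.inr (Sum.inl (i, j))), Sum.inr (Sum.inr (Sum.inr (Sum.inr g))) =>
      if j = 2 ∧ ¬ sat3G g (F i) then w else 0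
  | _, _ => 0

set_option maxHeartbeats 1600000
set_option maxRecDepth 8000

def cmidEquiv (m : ℕ) : CMid m ≃ (Fin m ⊕ Fin m ⊕ Fin m ⊕ Unit) where
  toFun c := match c with
    | .bl i => Sum.inl i
    | .bc i => Sum.inr (Sum.inl i)
    | .br i => Sum.inr (Sum.inr (Sum.inl i))
    | .bp => Sum.inr (Sum.inr (Sum.inr ()))
  invFun x := match x with
    | Sum.inl i => .bl i
    | Sum.inr (Sum.inl i) => .bc i
    | Sum.inr (Sum.inr (Sum.inl i)) => .br i
    | Sum.inr (Sum.inr (Sum.inr _)) => .bp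
  left_inv c := by cases c <;> rfl
  right_inv x := by rcases x with i | i | i | u <;> rfl

lemma sum_cmid {m : ℕ} (h : CMid m → ℕ) :
    ∑ c, h c = (∑ i, h (.bl i)) + ((∑ i, h (.bc i)) + ((∑ i, h (.br i)) + h .bp)) := by
  rw [← Equiv.sum_comp (cmidEquiv m).symm h]
  simp [Fintype.sum_sum_type, cmidEquiv]

noncomputable def mflow {U1 U2 U3 : Type*} [Fintype U2] {m : ℕ}
    (F : Fin m → Clause3 U1 U2 U3)
    (a : U1 → Bool) (g : U3 → Bool) : CV U1 U2 U3 m → CV U1 U2 U3 m → ℕ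
  | Sum.inl a', Sum.inr (Sum.inr (Sum.inl (i, j))) =>
      if a' = a ∧ ((j = 0 ∧ sat3A a (F i)) ∨ (j = 1 ∧ ¬ sat3A a (F i)))
      then 2 ^ Fintype.card U2 else 0
  | Sum.inr (Sum.inr (Sum.inl (i, j))), Sum.inr (Sum.inl (_, CMid.bc i')) =>
      if j = 0 ∧ (i = i' ∧ sat3A a (F i)) then 1 else 0
  | Sum.inr (Sum.inr (Sum.inl (i, j))), Sum.inr (Sum.inl (_, CMid.bl i')) =>
      if j = 1 ∧ (i = i' ∧ ¬ sat3A a (F i)) then 1 else 0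
  | Sum.inr (Sum.inl (b, CMid.bl i)), Sum.inr (Sum.inl (b', CMid.br i')) =>
      if b = b' ∧ (i = i' ∧ (¬ sat3A a (F i) ∧ ¬ sat3B b (F i) ∧ ¬ sat3G g (F i)))
      then 1 else 0
  | Sum.inr (Sum.inl (b, CMid.bl i)), Sum.inr (Sum.inl (b', CMid.bc i')) =>
      if b = b' ∧ (i = i' ∧ (¬ sat3A a (F i) ∧ (sat3B b (F i) ∨ sat3G g (F i))))
      then 1 else 0
  | Sum.inr (Sum.inl (b, CMid.bc i)), Sum.inr (Sum.inl (b', CMid.bp)) =>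
      if b = b' ∧ (sat3A a (F i) ∨ sat3B b (F i) ∨ sat3G g (F i)) then 1 else 0
  | Sum.inr (Sum.inl (b, CMid.br i)), Sum.inr (Sum.inr (Sum.inl (i', j))) =>
      if j = 2 ∧ (i = i' ∧ (¬ sat3A a (F i) ∧ ¬ sat3B b (F i) ∧ ¬ sat3G g (F i)))
      then 1 else 0
  | Sum.inr (Sum.inl (b, CMid.bp)), Sum.inr (Sum.inr (Sum.inr (Sum.inl _))) =>
      (Finset.univ.filter fun i => sat3A a (F i) ∨ sat3B b (F i) ∨ sat3G g (F i)).card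
  | Sum.inr (Sum.inr (Sum.inr (Sum.inl _))), Sum.inr (Sum.inr (Sum.inr (Sum.inr g'))) =>
      if g' = g then ∑ b : U2 → Bool,
        (Finset.univ.filter fun i => sat3A a (F i) ∨ sat3B b (F i) ∨ sat3G g (F i)).card
      else 0
  | Sum.inr (Sum.inr (Sum.inl (i, j))), Sum.inr (Sum.inr (Sum.inr (Sum.inr g'))) =>
      if g' = g ∧ j = 2 then (Finset.univ.filter fun b : U2 → Bool =>
        ¬ sat3A a (F i) ∧ ¬ sat3B b (F i) ∧ ¬ sat3G g (F i)).card else 0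
  | _, _ => 0

lemma sum_univ_congr {α : Type*} {i1 i2 : Fintype α} (f g : α → ℕ) (h : ∀ x, f x = g x) :
    (@Finset.univ α i1).sum f = (@Finset.univ α i2).sum g := by
  cases Subsingleton.elim i1 i2
  exact Finset.sum_congr rfl fun x _ => h x

section MF

variable {U1 U2 U3 : Type*} [Fintype U2] {m : ℕ} (F : Fin m → Clause3 U1 U2 U3) (a : U1 → Bool) (g : U3 → Bool)

@[simp] lemma mf0 (x0 : U1 → Bool) (x1 : U1 → Bool) :
    mflow F a g (Sum.inl x0) (Sum.inl x1) =
      0 := rfl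

@[simp] lemma mf1 (x0 : U1 → Bool) (x1 : U2 → Bool) (i1 : Fin m) :
    mflow F a g (Sum.inl x0) (Sum.inr (Sum.inl (x1, CMid.bl i1))) =
      0 := rfl

@[simp] lemma mf2 (x0 : U1 → Bool) (x1 : U2 → Bool) (i1 : Fin m) :
    mflow F a g (Sum.inl x0) (Sum.inr (Sum.inl (x1, CMid.bc i1))) =
      0 := rfl

@[simp] lemma mf3 (x0 : U1 → Bool) (x1 : U2 → Bool) (i1 : Fin m) :
    mflow F a g (Sum.inl x0) (Sum.inr (Sum.inl (x1, CMid.br i1))) =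
      0 := rfl

@[simp] lemma mf4 (x0 : U1 → Bool) (x1 : U2 → Bool) :
    mflow F a g (Sum.inl x0) (Sum.inr (Sum.inl (x1, CMid.bp))) =
      0 := rfl

@[simp] lemma mf5 (x0 : U1 → Bool) (i1 : Fin m) (j1 : Fin 3) :
    mflow F a g (Sum.inl x0) (Sum.inr (Sum.inr (Sum.inl (i1, j1)))) =
      if x0 = a ∧ ((j1 = 0 ∧ sat3A a (F i1)) ∨ (j1 = 1 ∧ ¬ sat3A a (F i1))) then 2 ^ Fintype.card U2 else 0 := rfl

@[simp] lemma mf6 (x0 : U1 → Bool) (u1 : Unit) :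
    mflow F a g (Sum.inl x0) (Sum.inr (Sum.inr (Sum.inr (Sum.inl u1)))) =
      0 := rfl

@[simp] lemma mf7 (x0 : U1 → Bool) (g1 : U3 → Bool) :
    mflow F a g (Sum.inl x0) (Sum.inr (Sum.inr (Sum.inr (Sum.inr g1)))) =
      0 := rfl

@[simp] lemma mf8 (x0 : U2 → Bool) (i0 : Fin m) (x1 : U1 → Bool) :
    mflow F a g (Sum.inr (Sum.inl (x0, CMid.bl i0))) (Sum.inl x1) =
      0 := rfl

@[simp] lemma mf9 (x0 : U2 → Bool) (i0 : Fin m) (x1 : U2 → Bool) (i1 : Fin m) :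
    mflow F a g (Sum.inr (Sum.inl (x0, CMid.bl i0))) (Sum.inr (Sum.inl (x1, CMid.bl i1))) =
      0 := rfl

@[simp] lemma mf10 (x0 : U2 → Bool) (i0 : Fin m) (x1 : U2 → Bool) (i1 : Fin m) :
    mflow F a g (Sum.inr (Sum.inl (x0, CMid.bl i0))) (Sum.inr (Sum.inl (x1, CMid.bc i1))) =
      if x0 = x1 ∧ (i0 = i1 ∧ (¬ sat3A a (F i0) ∧ (sat3B x0 (F i0) ∨ sat3G g (F i0)))) then 1 else 0 := rfl

@[simp] lemma mf11 (x0 : U2 → Bool) (i0 : Fin m) (x1 : U2 → Bool) (i1 : Fin m) :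
    mflow F a g (Sum.inr (Sum.inl (x0, CMid.bl i0))) (Sum.inr (Sum.inl (x1, CMid.br i1))) =
      if x0 = x1 ∧ (i0 = i1 ∧ (¬ sat3A a (F i0) ∧ ¬ sat3B x0 (F i0) ∧ ¬ sat3G g (F i0))) then 1 else 0 := rfl

@[simp] lemma mf12 (x0 : U2 → Bool) (i0 : Fin m) (x1 : U2 → Bool) :
    mflow F a g (Sum.inr (Sum.inl (x0, CMid.bl i0))) (Sum.inr (Sum.inl (x1, CMid.bp))) =
      0 := rfl

@[simp] lemma mf13 (x0 : U2 → Bool) (i0 : Fin m) (i1 : Fin m) (j1 : Fin 3) :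
    mflow F a g (Sum.inr (Sum.inl (x0, CMid.bl i0))) (Sum.inr (Sum.inr (Sum.inl (i1, j1)))) =
      0 := rfl

@[simp] lemma mf14 (x0 : U2 → Bool) (i0 : Fin m) (u1 : Unit) :
    mflow F a g (Sum.inr (Sum.inl (x0, CMid.bl i0))) (Sum.inr (Sum.inr (Sum.inr (Sum.inl u1)))) =
      0 := rfl

@[simp] lemma mf15 (x0 : U2 → Bool) (i0 : Fin m) (g1 : U3 → Bool) :
    mflow F a g (Sum.inr (Sum.inl (x0, CMid.bl i0))) (Sum.inr (Sum.inr (Sum.inr (Sum.inr g1)))) =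
      0 := rfl

@[simp] lemma mf16 (x0 : U2 → Bool) (i0 : Fin m) (x1 : U1 → Bool) :
    mflow F a g (Sum.inr (Sum.inl (x0, CMid.bc i0))) (Sum.inl x1) =
      0 := rfl

@[simp] lemma mf17 (x0 : U2 → Bool) (i0 : Fin m) (x1 : U2 → Bool) (i1 : Fin m) :
    mflow F a g (Sum.inr (Sum.inl (x0, CMid.bc i0))) (Sum.inr (Sum.inl (x1, CMid.bl i1))) =
      0 := rfl

@[simp] lemma mf18 (x0 : U2 → Bool) (i0 : Fin m) (x1 : U2 → Bool) (i1 : Fin m) :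
    mflow F a g (Sum.inr (Sum.inl (x0, CMid.bc i0))) (Sum.inr (Sum.inl (x1, CMid.bc i1))) =
      0 := rfl

@[simp] lemma mf19 (x0 : U2 → Bool) (i0 : Fin m) (x1 : U2 → Bool) (i1 : Fin m) :
    mflow F a g (Sum.inr (Sum.inl (x0, CMid.bc i0))) (Sum.inr (Sum.inl (x1, CMid.br i1))) =
      0 := rfl

@[simp] lemma mf20 (x0 : U2 → Bool) (i0 : Fin m) (x1 : U2 → Bool) :
    mflow F a g (Sum.inr (Sum.inl (x0, CMid.bc i0))) (Sum.inr (Sum.inl (x1, CMid.bp))) =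
      if x0 = x1 ∧ (sat3A a (F i0) ∨ sat3B x0 (F i0) ∨ sat3G g (F i0)) then 1 else 0 := rfl

@[simp] lemma mf21 (x0 : U2 → Bool) (i0 : Fin m) (i1 : Fin m) (j1 : Fin 3) :
    mflow F a g (Sum.inr (Sum.inl (x0, CMid.bc i0))) (Sum.inr (Sum.inr (Sum.inl (i1, j1)))) =
      0 := rfl

@[simp] lemma mf22 (x0 : U2 → Bool) (i0 : Fin m) (u1 : Unit) :
    mflow F a g (Sum.inr (Sum.inl (x0, CMid.bc i0))) (Sum.inr (Sum.inr (Sum.inr (Sum.inl u1)))) =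
      0 := rfl

@[simp] lemma mf23 (x0 : U2 → Bool) (i0 : Fin m) (g1 : U3 → Bool) :
    mflow F a g (Sum.inr (Sum.inl (x0, CMid.bc i0))) (Sum.inr (Sum.inr (Sum.inr (Sum.inr g1)))) =
      0 := rfl

@[simp] lemma mf24 (x0 : U2 → Bool) (i0 : Fin m) (x1 : U1 → Bool) :
    mflow F a g (Sum.inr (Sum.inl (x0, CMid.br i0))) (Sum.inl x1) =
      0 := rfl

@[simp] lemma mf25 (x0 : U2 → Bool) (i0 : Fin m) (x1 : U2 → Bool) (i1 : Fin m) :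
    mflow F a g (Sum.inr (Sum.inl (x0, CMid.br i0))) (Sum.inr (Sum.inl (x1, CMid.bl i1))) =
      0 := rfl

@[simp] lemma mf26 (x0 : U2 → Bool) (i0 : Fin m) (x1 : U2 → Bool) (i1 : Fin m) :
    mflow F a g (Sum.inr (Sum.inl (x0, CMid.br i0))) (Sum.inr (Sum.inl (x1, CMid.bc i1))) =
      0 := rfl

@[simp] lemma mf27 (x0 : U2 → Bool) (i0 : Fin m) (x1 : U2 → Bool) (i1 : Fin m) :
    mflow F a g (Sum.inr (Sum.inl (x0, CMid.br i0))) (Sum.inr (Sum.inl (x1, CMid.br i1))) =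
      0 := rfl

@[simp] lemma mf28 (x0 : U2 → Bool) (i0 : Fin m) (x1 : U2 → Bool) :
    mflow F a g (Sum.inr (Sum.inl (x0, CMid.br i0))) (Sum.inr (Sum.inl (x1, CMid.bp))) =
      0 := rfl

@[simp] lemma mf29 (x0 : U2 → Bool) (i0 : Fin m) (i1 : Fin m) (j1 : Fin 3) :
    mflow F a g (Sum.inr (Sum.inl (x0, CMid.br i0))) (Sum.inr (Sum.inr (Sum.inl (i1, j1)))) =
      if j1 = 2 ∧ (i0 = i1 ∧ (¬ sat3A a (F i0) ∧ ¬ sat3B x0 (F i0) ∧ ¬ sat3G g (F i0))) then 1 else 0 := rfl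

@[simp] lemma mf30 (x0 : U2 → Bool) (i0 : Fin m) (u1 : Unit) :
    mflow F a g (Sum.inr (Sum.inl (x0, CMid.br i0))) (Sum.inr (Sum.inr (Sum.inr (Sum.inl u1)))) =
      0 := rfl

@[simp] lemma mf31 (x0 : U2 → Bool) (i0 : Fin m) (g1 : U3 → Bool) :
    mflow F a g (Sum.inr (Sum.inl (x0, CMid.br i0))) (Sum.inr (Sum.inr (Sum.inr (Sum.inr g1)))) =
      0 := rfl

@[simp] lemma mf32 (x0 : U2 → Bool) (x1 : U1 → Bool) :
    mflow F a g (Sum.inr (Sum.inl (x0, CMid.bp))) (Sum.inl x1) =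
      0 := rfl

@[simp] lemma mf33 (x0 : U2 → Bool) (x1 : U2 → Bool) (i1 : Fin m) :
    mflow F a g (Sum.inr (Sum.inl (x0, CMid.bp))) (Sum.inr (Sum.inl (x1, CMid.bl i1))) =
      0 := rfl

@[simp] lemma mf34 (x0 : U2 → Bool) (x1 : U2 → Bool) (i1 : Fin m) :
    mflow F a g (Sum.inr (Sum.inl (x0, CMid.bp))) (Sum.inr (Sum.inl (x1, CMid.bc i1))) =
      0 := rfl

@[simp] lemma mf35 (x0 : U2 → Bool) (x1 : U2 → Bool) (i1 : Fin m) :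
    mflow F a g (Sum.inr (Sum.inl (x0, CMid.bp))) (Sum.inr (Sum.inl (x1, CMid.br i1))) =
      0 := rfl

@[simp] lemma mf36 (x0 : U2 → Bool) (x1 : U2 → Bool) :
    mflow F a g (Sum.inr (Sum.inl (x0, CMid.bp))) (Sum.inr (Sum.inl (x1, CMid.bp))) =
      0 := rfl

@[simp] lemma mf37 (x0 : U2 → Bool) (i1 : Fin m) (j1 : Fin 3) :
    mflow F a g (Sum.inr (Sum.inl (x0, CMid.bp))) (Sum.inr (Sum.inr (Sum.inl (i1, j1)))) =
      0 := rfl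

@[simp] lemma mf38 (x0 : U2 → Bool) (u1 : Unit) :
    mflow F a g (Sum.inr (Sum.inl (x0, CMid.bp))) (Sum.inr (Sum.inr (Sum.inr (Sum.inl u1)))) =
      (Finset.univ.filter fun i => sat3A a (F i) ∨ sat3B x0 (F i) ∨ sat3G g (F i)).card := rfl

@[simp] lemma mf39 (x0 : U2 → Bool) (g1 : U3 → Bool) :
    mflow F a g (Sum.inr (Sum.inl (x0, CMid.bp))) (Sum.inr (Sum.inr (Sum.inr (Sum.inr g1)))) =
      0 := rfl

@[simp] lemma mf40 (i0 : Fin m) (j0 : Fin 3) (x1 : U1 → Bool) :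
    mflow F a g (Sum.inr (Sum.inr (Sum.inl (i0, j0)))) (Sum.inl x1) =
      0 := rfl

@[simp] lemma mf41 (i0 : Fin m) (j0 : Fin 3) (x1 : U2 → Bool) (i1 : Fin m) :
    mflow F a g (Sum.inr (Sum.inr (Sum.inl (i0, j0)))) (Sum.inr (Sum.inl (x1, CMid.bl i1))) =
      if j0 = 1 ∧ (i0 = i1 ∧ ¬ sat3A a (F i0)) then 1 else 0 := rfl

@[simp] lemma mf42 (i0 : Fin m) (j0 : Fin 3) (x1 : U2 → Bool) (i1 : Fin m) :
    mflow F a g (Sum.inr (Sum.inr (Sum.inl (i0, j0)))) (Sum.inr (Sum.inl (x1, CMid.bc i1))) =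
      if j0 = 0 ∧ (i0 = i1 ∧ sat3A a (F i0)) then 1 else 0 := rfl

@[simp] lemma mf43 (i0 : Fin m) (j0 : Fin 3) (x1 : U2 → Bool) (i1 : Fin m) :
    mflow F a g (Sum.inr (Sum.inr (Sum.inl (i0, j0)))) (Sum.inr (Sum.inl (x1, CMid.br i1))) =
      0 := rfl

@[simp] lemma mf44 (i0 : Fin m) (j0 : Fin 3) (x1 : U2 → Bool) :
    mflow F a g (Sum.inr (Sum.inr (Sum.inl (i0, j0)))) (Sum.inr (Sum.inl (x1, CMid.bp))) =
      0 := rfl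

@[simp] lemma mf45 (i0 : Fin m) (j0 : Fin 3) (i1 : Fin m) (j1 : Fin 3) :
    mflow F a g (Sum.inr (Sum.inr (Sum.inl (i0, j0)))) (Sum.inr (Sum.inr (Sum.inl (i1, j1)))) =
      0 := rfl

@[simp] lemma mf46 (i0 : Fin m) (j0 : Fin 3) (u1 : Unit) :
    mflow F a g (Sum.inr (Sum.inr (Sum.inl (i0, j0)))) (Sum.inr (Sum.inr (Sum.inr (Sum.inl u1)))) =
      0 := rfl

@[simp] lemma mf47 (i0 : Fin m) (j0 : Fin 3) (g1 : U3 → Bool) :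
    mflow F a g (Sum.inr (Sum.inr (Sum.inl (i0, j0)))) (Sum.inr (Sum.inr (Sum.inr (Sum.inr g1)))) =
      if g1 = g ∧ j0 = 2 then (Finset.univ.filter fun b : U2 → Bool => ¬ sat3A a (F i0) ∧ ¬ sat3B b (F i0) ∧ ¬ sat3G g (F i0)).card else 0 := rfl

@[simp] lemma mf48 (u0 : Unit) (x1 : U1 → Bool) :
    mflow F a g (Sum.inr (Sum.inr (Sum.inr (Sum.inl u0)))) (Sum.inl x1) =
      0 := rfl

@[simp] lemma mf49 (u0 : Unit) (x1 : U2 → Bool) (i1 : Fin m) :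
    mflow F a g (Sum.inr (Sum.inr (Sum.inr (Sum.inl u0)))) (Sum.inr (Sum.inl (x1, CMid.bl i1))) =
      0 := rfl

@[simp] lemma mf50 (u0 : Unit) (x1 : U2 → Bool) (i1 : Fin m) :
    mflow F a g (Sum.inr (Sum.inr (Sum.inr (Sum.inl u0)))) (Sum.inr (Sum.inl (x1, CMid.bc i1))) =
      0 := rfl

@[simp] lemma mf51 (u0 : Unit) (x1 : U2 → Bool) (i1 : Fin m) :
    mflow F a g (Sum.inr (Sum.inr (Sum.inr (Sum.inl u0)))) (Sum.inr (Sum.inl (x1, CMid.br i1))) =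
      0 := rfl

@[simp] lemma mf52 (u0 : Unit) (x1 : U2 → Bool) :
    mflow F a g (Sum.inr (Sum.inr (Sum.inr (Sum.inl u0)))) (Sum.inr (Sum.inl (x1, CMid.bp))) =
      0 := rfl

@[simp] lemma mf53 (u0 : Unit) (i1 : Fin m) (j1 : Fin 3) :
    mflow F a g (Sum.inr (Sum.inr (Sum.inr (Sum.inl u0)))) (Sum.inr (Sum.inr (Sum.inl (i1, j1)))) =
      0 := rfl

@[simp] lemma mf54 (u0 : Unit) (u1 : Unit) :
    mflow F a g (Sum.inr (Sum.inr (Sum.inr (Sum.inl u0)))) (Sum.inr (Sum.inr (Sum.inr (Sum.inl u1)))) =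
      0 := rfl

@[simp] lemma mf55 (u0 : Unit) (g1 : U3 → Bool) :
    mflow F a g (Sum.inr (Sum.inr (Sum.inr (Sum.inl u0)))) (Sum.inr (Sum.inr (Sum.inr (Sum.inr g1)))) =
      if g1 = g then ∑ b : U2 → Bool, (Finset.univ.filter fun i => sat3A a (F i) ∨ sat3B b (F i) ∨ sat3G g (F i)).card else 0 := rfl

@[simp] lemma mf56 (g0 : U3 → Bool) (x1 : U1 → Bool) :
    mflow F a g (Sum.inr (Sum.inr (Sum.inr (Sum.inr g0)))) (Sum.inl x1) =
      0 := rfl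

@[simp] lemma mf57 (g0 : U3 → Bool) (x1 : U2 → Bool) (i1 : Fin m) :
    mflow F a g (Sum.inr (Sum.inr (Sum.inr (Sum.inr g0)))) (Sum.inr (Sum.inl (x1, CMid.bl i1))) =
      0 := rfl

@[simp] lemma mf58 (g0 : U3 → Bool) (x1 : U2 → Bool) (i1 : Fin m) :
    mflow F a g (Sum.inr (Sum.inr (Sum.inr (Sum.inr g0)))) (Sum.inr (Sum.inl (x1, CMid.bc i1))) =
      0 := rfl

@[simp] lemma mf59 (g0 : U3 → Bool) (x1 : U2 → Bool) (i1 : Fin m) :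
    mflow F a g (Sum.inr (Sum.inr (Sum.inr (Sum.inr g0)))) (Sum.inr (Sum.inl (x1, CMid.br i1))) =
      0 := rfl

@[simp] lemma mf60 (g0 : U3 → Bool) (x1 : U2 → Bool) :
    mflow F a g (Sum.inr (Sum.inr (Sum.inr (Sum.inr g0)))) (Sum.inr (Sum.inl (x1, CMid.bp))) =
      0 := rfl

@[simp] lemma mf61 (g0 : U3 → Bool) (i1 : Fin m) (j1 : Fin 3) :
    mflow F a g (Sum.inr (Sum.inr (Sum.inr (Sum.inr g0)))) (Sum.inr (Sum.inr (Sum.inl (i1, j1)))) =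
      0 := rfl

@[simp] lemma mf62 (g0 : U3 → Bool) (u1 : Unit) :
    mflow F a g (Sum.inr (Sum.inr (Sum.inr (Sum.inr g0)))) (Sum.inr (Sum.inr (Sum.inr (Sum.inl u1)))) =
      0 := rfl

@[simp] lemma mf63 (g0 : U3 → Bool) (g1 : U3 → Bool) :
    mflow F a g (Sum.inr (Sum.inr (Sum.inr (Sum.inr g0)))) (Sum.inr (Sum.inr (Sum.inr (Sum.inr g1)))) =
      0 := rfl

end MF

set_option maxHeartbeats 1600000
set_option maxRecDepth 8000


/-- if every total assignment (triple `(α, β, γ)`) satisfies at most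
`p − 1` clauses, then with `w = 2^{|U2|}`, for every pair `(α, γ)` the maximum `α`-`γ`
flow in `G_p` is at least `w·m`. -/
theorem stmt12 {U1 U2 U3 : Type*} [Fintype U1] [DecidableEq U1] [Fintype U2]
    [DecidableEq U2] [Fintype U3] [DecidableEq U3] {m p : ℕ}
    (hp1 : 1 ≤ p) (hpm : p ≤ m) (F : Fin m → Clause3 U1 U2 U3)
    (hsat : ∀ (a : U1 → Bool) (b : U2 → Bool) (g : U3 → Bool),
      (Finset.univ.filter fun i =>
        sat3A a (F i) ∨ sat3B b (F i) ∨ sat3G g (F i)).card ≤ p - 1) :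
    ∀ (a : U1 → Bool) (g : U3 → Bool),
      2 ^ Fintype.card U2 * m ≤
        maxFlow (ccap F (2 ^ Fintype.card U2) p)
          (Sum.inl a) (Sum.inr (Sum.inr (Sum.inr (Sum.inr g)))) := by
  intro a g
  have hcap : ∀ u v, mflow F a g u v ≤ ccap F (2 ^ Fintype.card U2) p u v := by
    intro u v
    rcases u with a' | ⟨b, c⟩ | ⟨i, j⟩ | - | g' <;>
      rcases v with a'' | ⟨b', c'⟩ | ⟨i', j'⟩ | - | g'' <;>
      (try cases c) <;> (try cases c') <;>
      (try simp [mflow, ccap]) <;> (try split_ifs) <;> (try simp_all) <;>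
      (try tauto) <;> (try aesop)
    all_goals
      first
        | exact hsat a _ _
        | exact (Finset.card_filter_le _ _).trans (by simp [Fintype.card_fun])
        | exact (Finset.sum_le_sum fun b _ => hsat a b _).trans
            (by simp [Finset.sum_const, Fintype.card_fun])
  have hcons : ∀ v : CV U1 U2 U3 m, v ≠ Sum.inl a →
      v ≠ Sum.inr (Sum.inr (Sum.inr (Sum.inr g))) →
      ∑ u, mflow F a g u v = ∑ u, mflow F a g v u := by
    intro v hs ht
    rcases v with a' | ⟨b, c⟩ | ⟨i, j⟩ | - | g'
    · have ha : a' ≠ a := fun h => hs (by rw [h])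
      simp [Fintype.sum_sum_type, Fintype.sum_prod_type, sum_cmid, ha,
        Fin.sum_univ_three, ite_and, Finset.sum_ite_eq, Finset.sum_ite_eq']
    · rcases c with i | i | i | _
      · by_cases hA : sat3A a (F i) <;> by_cases hB : sat3B b (F i) <;>
          by_cases hG : sat3G g (F i) <;>
        simp [Fintype.sum_sum_type, Fintype.sum_prod_type, sum_cmid, hA, hB, hG,
          Fin.sum_univ_three, ite_and, Finset.sum_ite_eq, Finset.sum_ite_eq']
      · by_cases hA : sat3A a (F i) <;> by_cases hB : sat3B b (F i) <;>
          by_cases hG : sat3G g (F i) <;>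
        simp [Fintype.sum_sum_type, Fintype.sum_prod_type, sum_cmid, hA, hB, hG,
          Fin.sum_univ_three, ite_and, Finset.sum_ite_eq, Finset.sum_ite_eq']
      · by_cases hA : sat3A a (F i) <;> by_cases hB : sat3B b (F i) <;>
          by_cases hG : sat3G g (F i) <;>
        simp [Fintype.sum_sum_type, Fintype.sum_prod_type, sum_cmid, hA, hB, hG,
          Fin.sum_univ_three, ite_and, Finset.sum_ite_eq, Finset.sum_ite_eq']
      · simp [Fintype.sum_sum_type, Fintype.sum_prod_type, sum_cmid,
          Fin.sum_univ_three, ite_and, Finset.sum_ite_eq, Finset.sum_ite_eq']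
    · fin_cases j <;>
      (try by_cases hA : sat3A a (F i)) <;>
      simp_all [Fintype.sum_sum_type, Fintype.sum_prod_type, sum_cmid,
        Fin.sum_univ_three, ite_and, Finset.sum_ite_eq, Finset.sum_ite_eq',
        Fintype.card_fun] <;>
      (try rw [Finset.card_filter]) <;>
      (try (apply sum_univ_congr; intro x; by_cases hb : sat3B x (F i) <;> by_cases hg2 : sat3G g (F i) <;> simp [hb, hg2]))
    · simp [Fintype.sum_sum_type, Fintype.sum_prod_type, sum_cmid,
        Fin.sum_univ_three, ite_and]
      rw [Finset.sum_eq_single_of_mem g (Finset.mem_univ g) (fun x _ hx => by simp [hx])]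
      rw [if_pos rfl]
      apply sum_univ_congr
      intro x
      congr!
    · have hg : g' ≠ g := fun h => ht (by rw [h])
      simp [Fintype.sum_sum_type, Fintype.sum_prod_type, sum_cmid, hg,
        Fin.sum_univ_three, ite_and, Finset.sum_ite_eq, Finset.sum_ite_eq']

  have hval : ∑ v, mflow F a g (Sum.inl a) v =
      2 ^ Fintype.card U2 * m + ∑ v, mflow F a g v (Sum.inl a) := by
    have h1 : ∀ x : Fin m, ((if sat3A a (F x) then (2:ℕ) ^ Fintype.card U2 else 0) +
        if sat3A a (F x) then 0 else 2 ^ Fintype.card U2) = 2 ^ Fintype.card U2 :=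
      fun x => by by_cases hA : sat3A a (F x) <;> simp [hA]
    simp [Fintype.sum_sum_type, Fintype.sum_prod_type, sum_cmid, Fin.sum_univ_three,
      ite_and, h1, Finset.sum_const, mul_comm]
  have hbdd : BddAbove {x : ℕ | ∃ f, IsFlow (ccap F (2 ^ Fintype.card U2) p)
      (Sum.inl a) (Sum.inr (Sum.inr (Sum.inr (Sum.inr g)))) f ∧
      ∑ v, f (Sum.inl a) v = x + ∑ v, f v (Sum.inl a)} := by
    refine ⟨∑ v, ccap F (2 ^ Fintype.card U2) p (Sum.inl a) v, ?_⟩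
    rintro x ⟨f, ⟨hc, _⟩, hv⟩
    calc x ≤ x + ∑ v, f v (Sum.inl a) := Nat.le_add_right _ _
      _ = ∑ v, f (Sum.inl a) v := hv.symm
      _ ≤ ∑ v, ccap F (2 ^ Fintype.card U2) p (Sum.inl a) v :=
          Finset.sum_le_sum fun v _ => hc _ v
  exact le_csSup hbdd ⟨mflow F a g, ⟨hcap, hcons⟩, hval⟩
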